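/- Let R be a Noetherian ring, I an ideal of R, and x an indeterminate. Then the integral closure of (I·R[x])^n in R[x] equals (the integral closure of I^n in R)·R[x] for each n ≥ 1. -/

import Mathlib

/-- The integral closure of an ideal `J`: elements `x` satisfying an equation
`x^n + r 1 * x^(n-1) + ... + r n = 0` with `r i ∈ J^i`. -/
def idealIntCl {R : Type*} [CommRing R] (J : Ideal R) : Set R :=
  {x | ∃ n : ℕ, 0 < n ∧ ∃ r : ℕ → R,
    (∀ i ∈ Finset.Icc 1 n, r i ∈ J ^ i) ∧
    x ^ n + ∑ i ∈ Finset.Icc 1 n, r i * x ^ (n - i) = 0}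

/-- `I^{⟨n⟩}`: the union over `s` outside all minimal primes of `I` of
`(integral closure of I^n : s)`. -/
def satPow {R : Type*} [CommRing R] (I : Ideal R) (n : ℕ) : Set R :=
  {x | ∃ s : R, (∀ p ∈ I.minimalPrimes, s ∉ p) ∧ x * s ∈ idealIntCl (I ^ n)}

open Polynomial

def almostIn {R : Type*} [CommRing R] (L : Ideal R) (a : R) : Prop :=
  ∃ m, ∀ k, a ^ (m + k) ∈ L ^ k

section LemmaA
variable {R : Type*} [CommRing R] {L : Ideal R} {a : R}

theorem almostIn_of_mem_idealIntCl (h : a ∈ idealIntCl L) : almostIn L a := by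
  obtain ⟨T, hT, r, hr, heq⟩ := h
  set A : Ideal R := Ideal.span {a} with hA
  have haA : a ∈ A := Ideal.mem_span_singleton_self a
  have hkey : ∀ s, A * (A + L) ^ s ≤ L * (A + L) ^ s + Ideal.span {a ^ (s + 1)} := by
    intro s
    induction s with
    | zero =>
      simp only [pow_zero, mul_one, zero_add, pow_one]
      exact (le_sup_right : A ≤ L ⊔ A)
    | succ s ih =>
      have e1 : Ideal.span {a ^ (s + 1)} * A ≤ Ideal.span {a ^ (s + 2)} := by
        rw [hA, Ideal.span_singleton_mul_span_singleton, ← pow_succ]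
      have e2 : Ideal.span {a ^ (s + 1)} * L ≤ L * (A + L) ^ (s + 1) := by
        calc Ideal.span {a ^ (s + 1)} * L = L * A ^ (s + 1) := by
              rw [← Ideal.span_singleton_pow, mul_comm]
          _ ≤ L * (A + L) ^ (s + 1) := by
              exact Ideal.mul_mono_right (Ideal.pow_right_mono le_sup_left _)
      calc A * (A + L) ^ (s + 1) = A * (A + L) ^ s * (A + L) := by ring
        _ ≤ (L * (A + L) ^ s + Ideal.span {a ^ (s + 1)}) * (A + L) :=
            Ideal.mul_mono_left ih
        _ = L * (A + L) ^ (s + 1) +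
            (Ideal.span {a ^ (s + 1)} * A + Ideal.span {a ^ (s + 1)} * L) := by ring
        _ ≤ L * (A + L) ^ (s + 1) + Ideal.span {a ^ (s + 2)} := by
            rw [Ideal.add_eq_sup, Ideal.add_eq_sup, Ideal.add_eq_sup]
            exact sup_le le_sup_left
              (sup_le (e1.trans le_sup_right) (e2.trans le_sup_left))
  have haT : a ^ T ∈ L * (A + L) ^ (T - 1) := by
    have heq' : a ^ T = -∑ i ∈ Finset.Icc 1 T, r i * a ^ (T - i) :=
      eq_neg_of_add_eq_zero_left heq
    rw [heq']
    refine neg_mem (Ideal.sum_mem _ fun i hi => ?_)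
    obtain ⟨hi1, hi2⟩ := Finset.mem_Icc.mp hi
    have h5 : L ^ i * A ^ (T - i) ≤ L * (A + L) ^ (T - 1) := by
      have h6 : L ^ i * A ^ (T - i) = L * (L ^ (i - 1) * A ^ (T - i)) := by
        rw [← mul_assoc, ← pow_succ']
        congr 2
        omega
      rw [h6]
      refine Ideal.mul_mono_right ?_
      calc L ^ (i - 1) * A ^ (T - i) ≤ (A + L) ^ (i - 1) * (A + L) ^ (T - i) :=
            Ideal.mul_mono (Ideal.pow_right_mono le_sup_right _)
              (Ideal.pow_right_mono le_sup_left _)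
        _ = (A + L) ^ (T - 1) := by rw [← pow_add]; congr 1; omega
    exact h5 (Ideal.mul_mem_mul (hr i hi) (Ideal.pow_mem_pow haA _))
  have hAM : A * (A + L) ^ (T - 1) ≤ L * (A + L) ^ (T - 1) := by
    refine (hkey (T - 1)).trans ?_
    rw [Ideal.add_eq_sup]
    refine sup_le le_rfl ?_
    rw [Ideal.span_le, Set.singleton_subset_iff]
    have : T - 1 + 1 = T := by omega
    rw [this]
    exact haT
  have main : ∀ k, a ^ (T - 1 + k) ∈ L ^ k * (A + L) ^ (T - 1) := by
    intro k
    induction k with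
    | zero =>
      simpa using Ideal.pow_mem_pow (Ideal.mem_sup_left haA) _
    | succ k ih =>
      have h8 : a ^ (T - 1 + k) * a ∈ L ^ k * (A + L) ^ (T - 1) * A :=
        Ideal.mul_mem_mul ih haA
      have h9 : L ^ k * (A + L) ^ (T - 1) * A ≤ L ^ (k + 1) * (A + L) ^ (T - 1) := by
        calc L ^ k * (A + L) ^ (T - 1) * A = L ^ k * (A * (A + L) ^ (T - 1)) := by ring
          _ ≤ L ^ k * (L * (A + L) ^ (T - 1)) := Ideal.mul_mono_right hAM
          _ = L ^ (k + 1) * (A + L) ^ (T - 1) := by ring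
      exact h9 (by rw [show T - 1 + (k + 1) = T - 1 + k + 1 from rfl, pow_succ]; exact h8)
  exact ⟨T - 1, fun k => Ideal.mul_le_left (main k)⟩

end LemmaA

section LemmaB
variable {R : Type*} [CommRing R] [IsNoetherianRing R] {L : Ideal R} {a : R}

theorem mem_idealIntCl_of_almostIn (h : almostIn L a) : a ∈ idealIntCl L := by
  classical
  obtain ⟨m, hm⟩ := h
  -- the elements a^(m+k) * X^k of the Rees algebra
  set S := reesAlgebra L with hS
  have hp : ∀ k : ℕ, (monomial k (a ^ (m + k)) : R[X]) ∈ S :=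
    fun k => reesAlgebra.monomial_mem.mpr (hm k)
  set p : ℕ → S := fun k => ⟨monomial k (a ^ (m + k)), hp k⟩ with hpdef
  -- the chain of ideals
  set c : ℕ →o Ideal S :=
    ⟨fun N => Ideal.span (p '' Set.Iic N),
     fun N M hNM => Ideal.span_mono (Set.image_mono (Set.Iic_subset_Iic.mpr hNM))⟩ with hc
  obtain ⟨N, hN⟩ := monotone_stabilizes_iff_noetherian.mpr
    (inferInstance : IsNoetherian S S) c
  have hmem : p (N + 1) ∈ Ideal.span (p '' Set.Iic N) := by
    have h1 : p (N + 1) ∈ c (N + 1) :=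
      Ideal.subset_span ⟨N + 1, Set.mem_Iic.mpr le_rfl, rfl⟩
    rwa [← hN (N + 1) (Nat.le_succ N)] at h1
  rw [← Ideal.submodule_span_eq, Submodule.mem_span_set'] at hmem
  obtain ⟨n, f, g, hfg⟩ := hmem
  -- choose indices
  have hgj : ∀ i : Fin n, ∃ j, j ≤ N ∧ (g i : S) = p j := by
    intro i
    obtain ⟨j, hj, hjx⟩ := (g i).2
    exact ⟨j, hj, hjx.symm⟩
  choose j hjN hgp using hgj
  -- push the equation to R[X]
  have hfg' : ∑ i : Fin n, (f i : R[X]) * (monomial (j i) (a ^ (m + j i)) : R[X])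
      = monomial (N + 1) (a ^ (m + (N + 1))) := by
    have h0 := congrArg (Subalgebra.val S) hfg
    simp only [map_sum] at h0
    refine Eq.trans ?_ h0
    refine Finset.sum_congr rfl fun i _ => ?_
    rw [hgp i]
    rfl
  -- take the coefficient at N+1
  set T := m + N + 1 with hT
  have hcoeff : a ^ T = ∑ i : Fin n, ((f i : R[X]).coeff (N + 1 - j i)) * a ^ (T - (N + 1 - j i)) := by
    have := congrArg (fun q : R[X] => q.coeff (N + 1)) hfg'
    rw [coeff_monomial] at this
    simp only [if_pos rfl] at this
    rw [finset_sum_coeff] at this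
    have h2 : ∀ i : Fin n,
        ((f i : R[X]) * monomial (j i) (a ^ (m + j i))).coeff (N + 1)
        = (f i : R[X]).coeff (N + 1 - j i) * a ^ (T - (N + 1 - j i)) := by
      intro i
      have hj1 : N + 1 - j i + j i = N + 1 := by
        have := hjN i; omega
      have hj2 : T - (N + 1 - j i) = m + j i := by
        have := hjN i; omega
      have h3 : ((f i : R[X]) * monomial (j i) (a ^ (m + j i))).coeff (N + 1)
          = (f i : R[X]).coeff (N + 1 - j i) * a ^ (m + j i) := by
        conv_lhs => rw [← hj1]
        exact coeff_mul_monomial _ _ _ _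
      rw [h3, hj2]
    rw [Finset.sum_congr rfl fun i _ => h2 i] at this
    rw [show m + (N + 1) = T from by omega] at this
    exact this.symm
  -- build the integral equation
  refine ⟨T, by omega, fun e => -∑ i ∈ Finset.univ.filter (fun i : Fin n => N + 1 - j i = e),
    (f i : R[X]).coeff e, fun e he => ?_, ?_⟩
  · refine neg_mem (Ideal.sum_mem _ fun i _ => ?_)
    exact (f i).2 e
  · have hmaps : ∀ i : Fin n, i ∈ Finset.univ → N + 1 - j i ∈ Finset.Icc 1 T := by
      intro i _
      have := hjN i
      rw [Finset.mem_Icc]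
      omega
    have hre : ∑ e ∈ Finset.Icc 1 T,
        (-∑ i ∈ Finset.univ.filter (fun i : Fin n => N + 1 - j i = e),
          (f i : R[X]).coeff e) * a ^ (T - e)
        = -∑ i : Fin n, ((f i : R[X]).coeff (N + 1 - j i)) * a ^ (T - (N + 1 - j i)) := by
      rw [← Finset.sum_fiberwise_of_maps_to hmaps
        (fun i => ((f i : R[X]).coeff (N + 1 - j i)) * a ^ (T - (N + 1 - j i)))]
      rw [← Finset.sum_neg_distrib]
      refine Finset.sum_congr rfl fun e he => ?_
      rw [neg_mul, Finset.sum_mul]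
      congr 1
      refine Finset.sum_congr rfl fun i hi => ?_
      have : N + 1 - j i = e := (Finset.mem_filter.mp hi).2
      rw [this]
    rw [hre, hcoeff]
    ring

end LemmaB

section Closure
variable {R : Type*} [CommRing R] {L : Ideal R} {a b : R}

theorem pow_mem_of_almost (m : ℕ) (hm : ∀ k, a ^ (m + k) ∈ L ^ k) (s : ℕ) :
    a ^ s ∈ L ^ (s - m) := by
  rcases le_or_gt m s with h | h
  · have h2 : a ^ s = a ^ (m + (s - m)) := by congr 1; omega
    rw [h2]; exact hm _
  · have h3 : s - m = 0 := by omega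
    rw [h3, pow_zero, Ideal.one_eq_top]
    trivial

theorem almostIn_zero : almostIn L 0 :=
  ⟨1, fun k => by rw [zero_pow (by omega)]; exact zero_mem _⟩

theorem almostIn_neg (h : almostIn L a) : almostIn L (-a) := by
  obtain ⟨m, hm⟩ := h
  exact ⟨m, fun k => by rw [neg_pow]; exact Ideal.mul_mem_left _ _ (hm k)⟩

theorem almostIn_add (ha : almostIn L a) (hb : almostIn L b) : almostIn L (a + b) := by
  obtain ⟨m, hm⟩ := ha
  obtain ⟨m', hm'⟩ := hb
  refine ⟨m + m', fun k => ?_⟩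
  rw [add_pow]
  refine Ideal.sum_mem _ fun s hs => ?_
  rw [Finset.mem_range] at hs
  refine Ideal.mul_mem_right _ _ ?_
  have h1 : a ^ s ∈ L ^ (s - m) := pow_mem_of_almost m hm s
  have h2 : b ^ (m + m' + k - s) ∈ L ^ (m + m' + k - s - m') := pow_mem_of_almost m' hm' _
  have h3 : L ^ ((s - m) + (m + m' + k - s - m')) ≤ L ^ k :=
    Ideal.pow_le_pow_right (by omega)
  exact h3 (by rw [pow_add]; exact Ideal.mul_mem_mul h1 h2)

theorem almostIn_sum {ι : Type*} (s : Finset ι) (f : ι → R)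
    (h : ∀ i ∈ s, almostIn L (f i)) : almostIn L (∑ i ∈ s, f i) :=
  Finset.sum_induction f (almostIn L) (fun _ _ ha hb => almostIn_add ha hb) almostIn_zero h

end Closure

section Key
variable {R : Type*} [CommRing R] [IsNoetherianRing R]

theorem hpowC (K : Ideal R) (k : ℕ) :
    (Ideal.map (C : R →+* R[X]) K) ^ k = Ideal.map (C : R →+* R[X]) (K ^ k) :=
  (Ideal.map_pow _ _ _).symm

theorem almostIn_monomial (K : Ideal R) (c : R) (d : ℕ) (h : almostIn K c) :
    almostIn (Ideal.map (C : R →+* R[X]) K) (monomial d c) := by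
  obtain ⟨m, hm⟩ := h
  refine ⟨m, fun k => ?_⟩
  rw [monomial_pow, hpowC, Ideal.mem_map_C_iff]
  intro i
  rw [coeff_monomial]
  split
  · exact hm k
  · exact zero_mem _

theorem almostIn_coeff (K : Ideal R) (f : R[X])
    (hf : almostIn (Ideal.map (C : R →+* R[X]) K) f) (i : ℕ) :
    almostIn K (f.coeff i) := by
  have H : ∀ (N : ℕ) (f : R[X]), f.support.card ≤ N →
      almostIn (Ideal.map (C : R →+* R[X]) K) f → ∀ i, almostIn K (f.coeff i) := by
    intro N
    induction N with
    | zero =>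
      intro f hf _ i
      have h0 : f = 0 := by
        rw [← Polynomial.support_eq_empty, ← Finset.card_eq_zero]
        omega
      rw [h0, coeff_zero]
      exact almostIn_zero
    | succ N ih =>
      intro f hcard haf i
      by_cases h0 : f = 0
      · rw [h0, coeff_zero]; exact almostIn_zero
      obtain ⟨m, hm⟩ := haf
      have hlead : almostIn K (f.coeff f.natDegree) := by
        refine ⟨m, fun k => ?_⟩
        have h1 := hm k
        rw [hpowC, Ideal.mem_map_C_iff] at h1
        have h2 := h1 ((m + k) * f.natDegree)
        rwa [coeff_pow_mul_natDegree] at h2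
      have herase : almostIn (Ideal.map (C : R →+* R[X]) K) f.eraseLead := by
        rw [← f.self_sub_monomial_natDegree_leadingCoeff, sub_eq_add_neg]
        exact almostIn_add ⟨m, hm⟩ (almostIn_neg (almostIn_monomial K _ _ hlead))
      rcases eq_or_ne i f.natDegree with rfl | hne
      · exact hlead
      · have h4 : f.coeff i = f.eraseLead.coeff i := by
          rw [Polynomial.eraseLead_coeff, if_neg hne]
        rw [h4]
        refine ih f.eraseLead ?_ herase i
        have := Polynomial.eraseLead_support_card_lt h0
        omega
  exact H f.support.card f le_rfl hf i

theorem key (K : Ideal R) :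
    idealIntCl (Ideal.map (C : R →+* R[X]) K) = {f : R[X] | ∀ i, f.coeff i ∈ idealIntCl K} := by
  ext f
  constructor
  · intro hf i
    exact mem_idealIntCl_of_almostIn
      (almostIn_coeff K f (almostIn_of_mem_idealIntCl hf) i)
  · intro hf
    refine mem_idealIntCl_of_almostIn ?_
    rw [f.as_sum_support]
    exact almostIn_sum _ _ fun i _ =>
      almostIn_monomial K _ _ (almostIn_of_mem_idealIntCl (hf i))

end Key


theorem stmt17 {R : Type*} [CommRing R] [IsNoetherianRing R] (I : Ideal R) (n : ℕ)
    (hn : 1 ≤ n) :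
    idealIntCl ((I.map (Polynomial.C : R →+* Polynomial R)) ^ n) =
      {f : Polynomial R | ∀ i, f.coeff i ∈ idealIntCl (I ^ n)} := by
  rw [← Ideal.map_pow, key]
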